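/- Let G be a 1-subdivided star with center a, middle vertices b_1, …, b_n and leaves c_1, …, c_n, with weight function w satisfying w(c_1) ≥ w(c_2) ≥ … ≥ w(c_n), and w(b_i) ≤ w(b_j) whenever i ≤ j and w(c_i) = w(c_j). Then there exists a treedepth decomposition T of G of minimum weighted depth such that every c_k is a ≤_T-maximal element and, for all i < j ≤ n, if b_i <_T a and b_j <_T a then b_i <_T b_j. -/

import Mathlib

/-- A treedepth decomposition of a simple graph `G`: a partial order `le` on the
vertices such that the set of elements below any vertex is linearly ordered, and
the endpoints of every edge are comparable. -/
structure TDDecomp {V : Type*} (G : SimpleGraph V) where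
  le : V → V → Prop
  le_refl : ∀ x, le x x
  le_antisymm : ∀ x y, le x y → le y x → x = y
  le_trans : ∀ x y z, le x y → le y z → le x z
  down_linear : ∀ x y z, le y x → le z x → le y z ∨ le z y
  adj_comparable : ∀ u v, G.Adj u v → le u v ∨ le v u

/-- A chain of a treedepth decomposition: a finite set of pairwise comparable vertices. -/
def TDDecomp.IsChain {V : Type*} {G : SimpleGraph V} (T : TDDecomp G) (C : Finset V) : Prop :=
  ∀ x ∈ C, ∀ y ∈ C, T.le x y ∨ T.le y x

/-- The weighted depth of a treedepth decomposition: the maximum over all chains `C`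
of the total weight of `C`. -/
noncomputable def TDDecomp.weightedDepth {V : Type*} {G : SimpleGraph V}
    (T : TDDecomp G) (w : V → ℕ) : ℕ :=
  sSup {s | ∃ C : Finset V, T.IsChain C ∧ s = C.sum w}

/-- The weighted treedepth of `G` with weight function `w`: the minimum weighted depth
over all treedepth decompositions of `G`. -/
noncomputable def wtd {V : Type*} (G : SimpleGraph V) (w : V → ℕ) : ℕ :=
  sInf {s | ∃ T : TDDecomp G, s = T.weightedDepth w}

/-- Vertices of a 1-subdivided star with `n` branches: the center `a`, the middle
vertices `b_1, …, b_n` and the leaves `c_1, …, c_n`. -/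
inductive StarV (n : ℕ) where
  | center : StarV n
  | mid : Fin n → StarV n
  | leaf : Fin n → StarV n

/-- The 1-subdivided star: edges are exactly `a b_i` and `b_i c_i` for `1 ≤ i ≤ n`. -/
def subdivStar (n : ℕ) : SimpleGraph (StarV n) :=
  SimpleGraph.fromRel (fun x y =>
    (∃ i, x = StarV.center ∧ y = StarV.mid i) ∨
    (∃ i, x = StarV.mid i ∧ y = StarV.leaf i))

-- ===== auxiliary material =====
open StarV

def starEquiv (n : ℕ) : StarV n ≃ (Unit ⊕ Fin n ⊕ Fin n) where
  toFun x := match x with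
    | .center => .inl ()
    | .mid i => .inr (.inl i)
    | .leaf i => .inr (.inr i)
  invFun x := match x with
    | .inl _ => .center
    | .inr (.inl i) => .mid i
    | .inr (.inr i) => .leaf i
  left_inv x := by cases x <;> rfl
  right_inv x := by rcases x with _ | (i | i) <;> rfl

instance (n : ℕ) : DecidableEq (StarV n) := (starEquiv n).decidableEq
instance (n : ℕ) : Fintype (StarV n) := Fintype.ofEquiv _ (starEquiv n).symm

variable {n : ℕ}

lemma adj_center_mid (i : Fin n) : (subdivStar n).Adj StarV.center (StarV.mid i) := by
  constructor
  · exact fun h => nomatch h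
  · exact Or.inl (Or.inl ⟨i, rfl, rfl⟩)

lemma adj_mid_leaf (i : Fin n) : (subdivStar n).Adj (StarV.mid i) (StarV.leaf i) := by
  constructor
  · exact fun h => nomatch h
  · exact Or.inl (Or.inr ⟨i, rfl, rfl⟩)

section depth
variable {V : Type*} [Fintype V] {G : SimpleGraph V} (T : TDDecomp G) (w : V → ℕ)
set_option linter.unusedSectionVars false

lemma depth_ge {C : Finset V} (hC : T.IsChain C) : C.sum w ≤ T.weightedDepth w := by
  apply le_csSup
  · refine ⟨Finset.univ.sum w, ?_⟩
    rintro s ⟨D, _, rfl⟩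
    exact Finset.sum_le_sum_of_subset (Finset.subset_univ D)
  · exact ⟨C, hC, rfl⟩

lemma depth_le {m : ℕ} (h : ∀ C : Finset V, T.IsChain C → C.sum w ≤ m) :
    T.weightedDepth w ≤ m := by
  apply csSup_le
  · exact ⟨0, ∅, fun x hx => absurd hx (by simp), by simp⟩
  · rintro s ⟨C, hC, rfl⟩; exact h C hC

end depth

-- a chain with a top element
lemma chain_of_top {V : Type*} {G : SimpleGraph V} (T : TDDecomp G) {C : Finset V} {t : V}
    (ht : ∀ x ∈ C, T.le x t) : T.IsChain C :=
  fun x hx y hy => T.down_linear t x y (ht x hx) (ht y hy)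

lemma chain_has_top {V : Type*} {G : SimpleGraph V} (T : TDDecomp G) (C : Finset V)
    (h : T.IsChain C) (hne : C.Nonempty) : ∃ t ∈ C, ∀ x ∈ C, T.le x t := by
  classical
  induction C using Finset.induction_on with
  | empty => exact absurd hne (by simp)
  | @insert a C ha ih =>
    rcases C.eq_empty_or_nonempty with rfl | hCne
    · exact ⟨a, by simp, by simp [T.le_refl]⟩
    · obtain ⟨t, htC, htop⟩ := ih (fun x hx y hy =>
        h x (Finset.mem_insert_of_mem hx) y (Finset.mem_insert_of_mem hy)) hCne
      rcases h a (Finset.mem_insert_self a C) t (Finset.mem_insert_of_mem htC) with hat | hta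
      · refine ⟨t, Finset.mem_insert_of_mem htC, ?_⟩
        intro x hx
        rcases Finset.mem_insert.mp hx with rfl | hx
        · exact hat
        · exact htop x hx
      · refine ⟨a, Finset.mem_insert_self a C, ?_⟩
        intro x hx
        rcases Finset.mem_insert.mp hx with rfl | hx
        · exact T.le_refl _
        · exact T.le_trans _ _ _ (htop x hx) hta

-- trivial decomposition (for nonemptiness)
def rankV : StarV n → ℕ
  | .center => 0
  | .mid i => 1 + i
  | .leaf i => 1 + n + i

lemma rankV_inj : Function.Injective (rankV (n := n)) := by
  intro x y h
  cases x <;> cases y <;>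
    simp only [rankV, StarV.mid.injEq, StarV.leaf.injEq, Fin.ext_iff] at h ⊢ <;>
    first
    | rfl
    | omega
    | (rename_i i j; have := i.isLt; have := j.isLt; omega)

def trivDecomp : TDDecomp (subdivStar n) where
  le x y := rankV x ≤ rankV y
  le_refl _ := le_refl _
  le_antisymm x y h1 h2 := rankV_inj (le_antisymm h1 h2)
  le_trans _ _ _ := le_trans
  down_linear _ _ _ _ _ := le_total _ _
  adj_comparable _ _ _ := le_total _ _

-- ===== canonical decomposition parameterized by S =====

def canonLe (S : Finset (Fin n)) : StarV n → StarV n → Prop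
  | .center, .center => True
  | .center, .mid j => j ∉ S
  | .center, .leaf j => j ∉ S
  | .mid i, .center => i ∈ S
  | .mid i, .mid j => i = j ∨ (i ∈ S ∧ j ∈ S ∧ i < j) ∨ (i ∈ S ∧ j ∉ S)
  | .mid i, .leaf j => (i ∈ S ∧ j ∈ S ∧ i ≤ j) ∨ (i = j ∧ j ∉ S) ∨ (i ∈ S ∧ j ∉ S)
  | .leaf i, .leaf j => i = j
  | .leaf _, .center => False
  | .leaf _, .mid _ => False

def canon (S : Finset (Fin n)) : TDDecomp (subdivStar n) where
  le := canonLe S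
  le_refl x := by cases x <;> simp [canonLe]
  le_antisymm x y h1 h2 := by
    cases x with
    | center =>
      cases y with
      | center => rfl
      | mid j => exact absurd h2 h1
      | leaf j => exact h2.elim
    | mid i =>
      cases y with
      | center => exact absurd h1 h2
      | mid j =>
        rcases h1 with rfl | ⟨_, _, h1⟩ | ⟨_, hj⟩
        · rfl
        · rcases h2 with rfl | ⟨_, _, h2⟩ | ⟨_, hi⟩
          · rfl
          · exact absurd (h1.trans h2) (lt_irrefl _)
          · exact absurd ‹i ∈ S› hi
        · rcases h2 with rfl | ⟨hj', _⟩ | ⟨hj', _⟩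
          · rfl
          · exact absurd hj' hj
          · exact absurd hj' hj
      | leaf j => exact h2.elim
    | leaf i =>
      cases y with
      | center => exact h1.elim
      | mid j => exact h1.elim
      | leaf j => exact congrArg StarV.leaf ((show j = i from h2).symm)
  le_trans x y z h1 h2 := by
    cases x with
    | leaf i =>
      cases y with
      | center => exact h1.elim
      | mid j => exact h1.elim
      | leaf j =>
        cases z with
        | center => exact h2.elim
        | mid k => exact h2.elim
        | leaf k => exact (show i = j from h1) ▸ h2
    | center =>
      cases y with
      | center => exact h2
      | mid j =>
        cases z with
        | center => exact absurd h2 h1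
        | mid k =>
          rcases h2 with rfl | ⟨hj, _⟩ | ⟨hj, _⟩
          · exact h1
          · exact absurd hj h1
          · exact absurd hj h1
        | leaf k =>
          rcases h2 with ⟨hj, _⟩ | ⟨rfl, hk⟩ | ⟨hj, _⟩
          · exact absurd hj h1
          · exact hk
          · exact absurd hj h1
      | leaf j =>
        cases z with
        | center => exact h2.elim
        | mid k => exact h2.elim
        | leaf k => exact (show j = k from h2) ▸ h1
    | mid i =>
      cases y with
      | center =>
        cases z with
        | center => exact h1
        | mid k => exact Or.inr (Or.inr ⟨h1, h2⟩)
        | leaf k => exact Or.inr (Or.inr ⟨h1, h2⟩)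
      | mid j =>
        cases z with
        | center =>
          rcases h1 with rfl | ⟨hi, _, _⟩ | ⟨hi, hj⟩
          · exact h2
          · exact hi
          · exact absurd h2 hj
        | mid k =>
          rcases h1 with rfl | ⟨hi, hj, hij⟩ | ⟨hi, hj⟩
          · exact h2
          · rcases h2 with rfl | ⟨_, hk, hjk⟩ | ⟨_, hk⟩
            · exact Or.inr (Or.inl ⟨hi, hj, hij⟩)
            · exact Or.inr (Or.inl ⟨hi, hk, hij.trans hjk⟩)
            · exact Or.inr (Or.inr ⟨hi, hk⟩)
          · rcases h2 with rfl | ⟨hj', _, _⟩ | ⟨hj', _⟩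
            · exact Or.inr (Or.inr ⟨hi, hj⟩)
            · exact absurd hj' hj
            · exact absurd hj' hj
        | leaf k =>
          rcases h1 with rfl | ⟨hi, hj, hij⟩ | ⟨hi, hj⟩
          · exact h2
          · rcases h2 with ⟨_, hk, hjk⟩ | ⟨rfl, hk⟩ | ⟨_, hk⟩
            · exact Or.inl ⟨hi, hk, hij.le.trans hjk⟩
            · exact absurd hj hk
            · exact Or.inr (Or.inr ⟨hi, hk⟩)
          · rcases h2 with ⟨hj', _, _⟩ | ⟨rfl, hk⟩ | ⟨hj', _⟩
            · exact absurd hj' hj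
            · exact Or.inr (Or.inr ⟨hi, hk⟩)
            · exact absurd hj' hj
      | leaf j =>
        cases z with
        | center => exact h2.elim
        | mid k => exact h2.elim
        | leaf k => exact (show j = k from h2) ▸ h1
  down_linear x y z h1 h2 := by
    classical
    cases x with
    | center =>
      cases y with
      | center =>
        cases z with
        | center => exact Or.inl trivial
        | mid k => exact Or.inr h2
        | leaf k => exact h2.elim
      | mid j =>
        cases z with
        | center => exact Or.inl h1
        | mid k =>
          rcases lt_trichotomy j k with h | rfl | h
          · exact Or.inl (Or.inr (Or.inl ⟨h1, h2, h⟩))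
          · exact Or.inl (Or.inl rfl)
          · exact Or.inr (Or.inr (Or.inl ⟨h2, h1, h⟩))
        | leaf k => exact h2.elim
      | leaf j => exact h1.elim
    | mid i =>
      cases y with
      | center =>
        cases z with
        | center => exact Or.inl trivial
        | mid k =>
          rcases h2 with rfl | ⟨hk, _, _⟩ | ⟨hk, _⟩
          · exact Or.inl h1
          · exact Or.inr hk
          · exact Or.inr hk
        | leaf k => exact h2.elim
      | mid j =>
        cases z with
        | center =>
          rcases h1 with rfl | ⟨hj, _, _⟩ | ⟨hj, _⟩
          · exact Or.inr h2
          · exact Or.inl hj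
          · exact Or.inl hj
        | mid k =>
          rcases h1 with rfl | ⟨hj, hiS, hji⟩ | ⟨hj, hiN⟩
          · exact Or.inr h2
          · rcases h2 with rfl | ⟨hk, _, _⟩ | ⟨hk, hiN⟩
            · exact Or.inl (Or.inr (Or.inl ⟨hj, hiS, hji⟩))
            · rcases lt_trichotomy j k with h | rfl | h
              · exact Or.inl (Or.inr (Or.inl ⟨hj, hk, h⟩))
              · exact Or.inl (Or.inl rfl)
              · exact Or.inr (Or.inr (Or.inl ⟨hk, hj, h⟩))
            · exact absurd hiS hiN
          · rcases h2 with rfl | ⟨hk, hiS, _⟩ | ⟨hk, _⟩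
            · exact Or.inl (Or.inr (Or.inr ⟨hj, hiN⟩))
            · exact absurd hiS hiN
            · rcases lt_trichotomy j k with h | rfl | h
              · exact Or.inl (Or.inr (Or.inl ⟨hj, hk, h⟩))
              · exact Or.inl (Or.inl rfl)
              · exact Or.inr (Or.inr (Or.inl ⟨hk, hj, h⟩))
        | leaf k => exact h2.elim
      | leaf j => exact h1.elim
    | leaf i =>
      cases y with
      | center =>
        cases z with
        | center => exact Or.inl trivial
        | mid k =>
          rcases h2 with ⟨hk, _, _⟩ | ⟨rfl, hk⟩ | ⟨hk, _⟩
          · exact Or.inr hk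
          · exact Or.inl h1
          · exact Or.inr hk
        | leaf k =>
          cases (show k = i from h2)
          exact Or.inl h1
      | mid j =>
        cases z with
        | center =>
          rcases h1 with ⟨hj, _, _⟩ | ⟨rfl, hj⟩ | ⟨hj, _⟩
          · exact Or.inl hj
          · exact Or.inr h2
          · exact Or.inl hj
        | mid k =>
          rcases h1 with ⟨hj, _, _⟩ | ⟨rfl, hi⟩ | ⟨hj, hi⟩
          · rcases h2 with ⟨hk, _, _⟩ | ⟨rfl, hk⟩ | ⟨hk, hk'⟩
            · rcases lt_trichotomy j k with h | rfl | h
              · exact Or.inl (Or.inr (Or.inl ⟨hj, hk, h⟩))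
              · exact Or.inl (Or.inl rfl)
              · exact Or.inr (Or.inr (Or.inl ⟨hk, hj, h⟩))
            · exact Or.inl (Or.inr (Or.inr ⟨hj, hk⟩))
            · exact absurd ‹i ∈ S› hk'
          · rcases h2 with ⟨hk, hi', _⟩ | ⟨rfl, hk⟩ | ⟨hk, _⟩
            · exact absurd hi' hi
            · exact Or.inl (Or.inl rfl)
            · exact Or.inr (Or.inr (Or.inr ⟨hk, hi⟩))
          · rcases h2 with ⟨hk, hi', _⟩ | ⟨rfl, hk⟩ | ⟨hk, _⟩
            · exact absurd hi' hi
            · exact Or.inl (Or.inr (Or.inr ⟨hj, hk⟩))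
            · rcases lt_trichotomy j k with h | rfl | h
              · exact Or.inl (Or.inr (Or.inl ⟨hj, hk, h⟩))
              · exact Or.inl (Or.inl rfl)
              · exact Or.inr (Or.inr (Or.inl ⟨hk, hj, h⟩))
        | leaf k =>
          cases (show k = i from h2)
          exact Or.inl h1
      | leaf j =>
        cases (show j = i from h1)
        cases z with
        | center => exact Or.inr h2
        | mid k => exact Or.inr h2
        | leaf k => exact Or.inr h2
  adj_comparable u v huv := by
    classical
    obtain ⟨hne, h⟩ := huv
    rcases h with (⟨i, rfl, rfl⟩ | ⟨i, rfl, rfl⟩) | (⟨i, rfl, rfl⟩ | ⟨i, rfl, rfl⟩) <;>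
      simp only [canonLe] <;> by_cases hi : i ∈ S <;> tauto

-- ===== candidate maximal chains and their sums =====

def Smid (S : Finset (Fin n)) : Finset (StarV n) := S.image StarV.mid

def Ma (S : Finset (Fin n)) : Finset (StarV n) := Smid S ∪ {StarV.center}

def Mout (S : Finset (Fin n)) (i : Fin n) : Finset (StarV n) :=
  Ma S ∪ {StarV.mid i, StarV.leaf i}

def Min' (S : Finset (Fin n)) (i : Fin n) : Finset (StarV n) :=
  (S.filter (· ≤ i)).image StarV.mid ∪ {StarV.leaf i}

lemma mem_Smid {S : Finset (Fin n)} {x : StarV n} :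
    x ∈ Smid S ↔ ∃ j ∈ S, StarV.mid j = x := by
  simp [Smid]

lemma sum_Ma (S : Finset (Fin n)) (w : StarV n → ℕ) :
    (Ma S).sum w = (∑ j ∈ S, w (StarV.mid j)) + w StarV.center := by
  rw [Ma, Finset.sum_union, Finset.sum_singleton, Smid, Finset.sum_image]
  · intro a _ b _ h
    injection h
  · simp [Smid, Finset.disjoint_singleton_right, Finset.mem_image]

lemma sum_Mout (S : Finset (Fin n)) (i : Fin n) (hi : i ∉ S) (w : StarV n → ℕ) :
    (Mout S i).sum w =
      ((∑ j ∈ S, w (StarV.mid j)) + w StarV.center) + (w (StarV.mid i) + w (StarV.leaf i)) := by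
  rw [Mout, Finset.sum_union, sum_Ma, Finset.sum_pair]
  · exact fun h => nomatch h
  · rw [Finset.disjoint_left]
    intro x hx
    rcases Finset.mem_union.mp hx with hx | hx
    · rcases mem_Smid.mp hx with ⟨j, hj, rfl⟩
      intro hmem
      rcases Finset.mem_insert.mp hmem with h | h
      · cases h; exact hi hj
      · rw [Finset.mem_singleton] at h; exact nomatch h
    · rw [Finset.mem_singleton] at hx
      subst hx
      intro hmem
      rcases Finset.mem_insert.mp hmem with h | h
      · exact nomatch h
      · rw [Finset.mem_singleton] at h; exact nomatch h

lemma sum_Min' (S : Finset (Fin n)) (i : Fin n) (w : StarV n → ℕ) :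
    (Min' S i).sum w =
      (∑ j ∈ S.filter (· ≤ i), w (StarV.mid j)) + w (StarV.leaf i) := by
  rw [Min', Finset.sum_union, Finset.sum_singleton, Finset.sum_image]
  · intro a _ b _ h
    injection h
  · simp [Finset.disjoint_singleton_right, Finset.mem_image]

lemma canon_chain_subset (S : Finset (Fin n)) (C : Finset (StarV n))
    (hC : (canon S).IsChain C) :
    (∃ i ∈ S, C ⊆ Min' S i) ∨ (∃ i, i ∉ S ∧ C ⊆ Mout S i) ∨ C ⊆ Ma S := by
  classical
  by_cases hleaf : ∃ i, StarV.leaf i ∈ C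
  · obtain ⟨i, hi⟩ := hleaf
    have hdown : ∀ x ∈ C, canonLe S x (StarV.leaf i) := by
      intro x hx
      rcases hC x hx _ hi with h | h
      · exact h
      · cases x with
        | center => exact h.elim
        | mid j => exact h.elim
        | leaf j => exact (show i = j from h).symm
    by_cases hiS : i ∈ S
    · left
      refine ⟨i, hiS, ?_⟩
      intro x hx
      have h := hdown x hx
      cases x with
      | center => exact absurd hiS h
      | mid j =>
        rcases h with ⟨hj, _, hji⟩ | ⟨rfl, hi'⟩ | ⟨_, hi'⟩
        · exact Finset.mem_union_left _
            (Finset.mem_image.mpr ⟨j, Finset.mem_filter.mpr ⟨hj, hji⟩, rfl⟩)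
        · exact absurd hiS hi'
        · exact absurd hiS hi'
      | leaf j =>
        cases (show j = i from h)
        exact Finset.mem_union_right _ (Finset.mem_singleton_self _)
    · right; left
      refine ⟨i, hiS, ?_⟩
      intro x hx
      have h := hdown x hx
      cases x with
      | center =>
        exact Finset.mem_union_left _ (Finset.mem_union_right _ (Finset.mem_singleton_self _))
      | mid j =>
        rcases h with ⟨_, hi', _⟩ | ⟨rfl, _⟩ | ⟨hj, _⟩
        · exact absurd hi' hiS
        · exact Finset.mem_union_right _ (Finset.mem_insert_self _ _)
        · exact Finset.mem_union_left _
            (Finset.mem_union_left _ (mem_Smid.mpr ⟨j, hj, rfl⟩))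
      | leaf j =>
        cases (show j = i from h)
        exact Finset.mem_union_right _
          (Finset.mem_insert_of_mem (Finset.mem_singleton_self _))
  · by_cases hmid : ∃ i, i ∉ S ∧ StarV.mid i ∈ C
    · obtain ⟨i, hiS, hi⟩ := hmid
      right; left
      refine ⟨i, hiS, ?_⟩
      intro x hx
      cases x with
      | center =>
        exact Finset.mem_union_left _ (Finset.mem_union_right _ (Finset.mem_singleton_self _))
      | leaf j => exact absurd ⟨j, hx⟩ hleaf
      | mid j =>
        rcases hC _ hx _ hi with h | h
        · rcases h with rfl | ⟨hj, _, _⟩ | ⟨hj, _⟩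
          · exact Finset.mem_union_right _ (Finset.mem_insert_self _ _)
          · exact Finset.mem_union_left _
              (Finset.mem_union_left _ (mem_Smid.mpr ⟨j, hj, rfl⟩))
          · exact Finset.mem_union_left _
              (Finset.mem_union_left _ (mem_Smid.mpr ⟨j, hj, rfl⟩))
        · rcases h with rfl | ⟨hi', _⟩ | ⟨hi', _⟩
          · exact Finset.mem_union_right _ (Finset.mem_insert_self _ _)
          · exact absurd hi' hiS
          · exact absurd hi' hiS
    · right; right
      intro x hx
      cases x with
      | center => exact Finset.mem_union_right _ (Finset.mem_singleton_self _)
      | leaf j => exact absurd ⟨j, hx⟩ hleaf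
      | mid j =>
        have hj : j ∈ S := by
          by_contra hj
          exact hmid ⟨j, hj, hx⟩
        exact Finset.mem_union_left _ (mem_Smid.mpr ⟨j, hj, rfl⟩)

-- ===== chains in an arbitrary decomposition T₀ =====

section T0
variable (T₀ : TDDecomp (subdivStar n)) (S : Finset (Fin n))
  (hS : ∀ i, i ∈ S ↔ T₀.le (StarV.mid i) StarV.center)
include hS

lemma Ma_chain : T₀.IsChain (Ma S) := by
  apply chain_of_top T₀ (t := StarV.center)
  intro x hx
  rcases Finset.mem_union.mp hx with hx | hx
  · rcases mem_Smid.mp hx with ⟨j, hj, rfl⟩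
    exact (hS j).mp hj
  · rw [Finset.mem_singleton] at hx
    subst hx
    exact T₀.le_refl _

lemma Mout_chain (i : Fin n) (hi : i ∉ S) : T₀.IsChain (Mout S i) := by
  have hcm : T₀.le StarV.center (StarV.mid i) := by
    rcases T₀.adj_comparable _ _ (adj_center_mid i) with h | h
    · exact h
    · exact absurd ((hS i).mpr h) hi
  have hmem : ∀ x ∈ Mout S i, T₀.le x (StarV.mid i) ∨ x = StarV.leaf i := by
    intro x hx
    rcases Finset.mem_union.mp hx with hx | hx
    · rcases Finset.mem_union.mp hx with hx | hx
      · rcases mem_Smid.mp hx with ⟨j, hj, rfl⟩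
        exact Or.inl (T₀.le_trans _ _ _ ((hS j).mp hj) hcm)
      · rw [Finset.mem_singleton] at hx
        subst hx
        exact Or.inl hcm
    · rcases Finset.mem_insert.mp hx with rfl | hx
      · exact Or.inl (T₀.le_refl _)
      · rw [Finset.mem_singleton] at hx
        exact Or.inr hx
  rcases T₀.adj_comparable _ _ (adj_mid_leaf i) with hml | hlm
  · apply chain_of_top T₀ (t := StarV.leaf i)
    intro x hx
    rcases hmem x hx with h | rfl
    · exact T₀.le_trans _ _ _ h hml
    · exact T₀.le_refl _
  · apply chain_of_top T₀ (t := StarV.mid i)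
    intro x hx
    rcases hmem x hx with h | rfl
    · exact h
    · exact hlm

lemma Min'_bound (w : StarV n → ℕ)
    (hc : ∀ i j : Fin n, i ≤ j → w (StarV.leaf j) ≤ w (StarV.leaf i))
    (i : Fin n) (hi : i ∈ S) :
    ∃ C : Finset (StarV n), T₀.IsChain C ∧ (Min' S i).sum w ≤ C.sum w := by
  classical
  set F := S.filter (· ≤ i) with hF
  have hiF : i ∈ F := Finset.mem_filter.mpr ⟨hi, le_refl i⟩
  have hFS : ∀ j ∈ F, j ∈ S := fun j hj => (Finset.mem_filter.mp hj).1
  have hFle : ∀ j ∈ F, j ≤ i := fun j hj => (Finset.mem_filter.mp hj).2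
  set Fc := F.image StarV.mid with hFc
  have hFc_chain : T₀.IsChain Fc := by
    intro x hx y hy
    rcases Finset.mem_image.mp hx with ⟨j, hj, rfl⟩
    rcases Finset.mem_image.mp hy with ⟨k, hk, rfl⟩
    exact T₀.down_linear StarV.center _ _ ((hS j).mp (hFS j hj)) ((hS k).mp (hFS k hk))
  obtain ⟨t, htF, htop⟩ := chain_has_top T₀ Fc hFc_chain ⟨_, Finset.mem_image_of_mem _ hiF⟩
  rcases Finset.mem_image.mp htF with ⟨k, hkF, rfl⟩
  have hlk_notmem : StarV.leaf k ∉ Fc := by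
    intro h
    rcases Finset.mem_image.mp h with ⟨j, _, hj⟩
    exact nomatch hj
  refine ⟨Fc ∪ {StarV.leaf k}, ?_, ?_⟩
  · rcases T₀.adj_comparable _ _ (adj_mid_leaf k) with hml | hlm
    · apply chain_of_top T₀ (t := StarV.leaf k)
      intro x hx
      rcases Finset.mem_union.mp hx with hx | hx
      · exact T₀.le_trans _ _ _ (htop x hx) hml
      · rw [Finset.mem_singleton] at hx; subst hx; exact T₀.le_refl _
    · apply chain_of_top T₀ (t := StarV.mid k)
      intro x hx
      rcases Finset.mem_union.mp hx with hx | hx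
      · exact htop x hx
      · rw [Finset.mem_singleton] at hx; subst hx; exact hlm
  · rw [Finset.sum_union (Finset.disjoint_singleton_right.mpr hlk_notmem),
      Finset.sum_singleton, sum_Min']
    have hsum : (∑ j ∈ F, w (StarV.mid j)) = Fc.sum w := by
      rw [hFc, Finset.sum_image]
      intro a _ b _ h
      injection h
    rw [← hF, hsum]
    exact Nat.add_le_add_left (hc k i (hFle k hkF)) _

end T0

/-- Suppose the leaves are ordered by decreasing weight and, among equal
leaf weights, the middle vertices by increasing weight. Then there is an optimal
treedepth decomposition `T` in which every `c_k` is `≤_T`-maximal and, whenever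
`i < j` and both `b_i <_T a` and `b_j <_T a`, we have `b_i <_T b_j`. -/
theorem stmt7 (n : ℕ) (w : StarV n → ℕ) (hw : ∀ v, 0 < w v)
    (hc : ∀ i j : Fin n, i ≤ j → w (StarV.leaf j) ≤ w (StarV.leaf i))
    (hb : ∀ i j : Fin n, i ≤ j → w (StarV.leaf i) = w (StarV.leaf j) →
      w (StarV.mid i) ≤ w (StarV.mid j)) :
    ∃ T : TDDecomp (subdivStar n),
      T.weightedDepth w = wtd (subdivStar n) w ∧
      (∀ k : Fin n, ∀ x, T.le (StarV.leaf k) x → x = StarV.leaf k) ∧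
      (∀ i j : Fin n, i < j →
        (T.le (StarV.mid i) StarV.center ∧ StarV.mid i ≠ StarV.center) →
        (T.le (StarV.mid j) StarV.center ∧ StarV.mid j ≠ StarV.center) →
        T.le (StarV.mid i) (StarV.mid j) ∧ StarV.mid i ≠ StarV.mid j) := by
  classical
  have hne : {s | ∃ T : TDDecomp (subdivStar n), s = T.weightedDepth w}.Nonempty :=
    ⟨(trivDecomp (n := n)).weightedDepth w, trivDecomp, rfl⟩
  obtain ⟨T₀, hT₀⟩ := Nat.sInf_mem hne
  have hw0 : wtd (subdivStar n) w = T₀.weightedDepth w := hT₀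
  set S : Finset (Fin n) :=
    Finset.univ.filter (fun i => T₀.le (StarV.mid i) StarV.center) with hSdef
  have hS : ∀ i, i ∈ S ↔ T₀.le (StarV.mid i) StarV.center := by
    intro i
    simp [hSdef]
  refine ⟨canon S, ?_, ?_, ?_⟩
  · have hle : (canon S).weightedDepth w ≤ T₀.weightedDepth w := by
      apply depth_le
      intro C hC
      rcases canon_chain_subset S C hC with ⟨i, hiS, hsub⟩ | ⟨i, hiN, hsub⟩ | hsub
      · obtain ⟨D, hD, hDs⟩ := Min'_bound T₀ S hS w hc i hiS
        exact le_trans (Finset.sum_le_sum_of_subset hsub) (le_trans hDs (depth_ge T₀ w hD))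
      · exact le_trans (Finset.sum_le_sum_of_subset hsub)
          (depth_ge T₀ w (Mout_chain T₀ S hS i hiN))
      · exact le_trans (Finset.sum_le_sum_of_subset hsub)
          (depth_ge T₀ w (Ma_chain T₀ S hS))
    have hge : wtd (subdivStar n) w ≤ (canon S).weightedDepth w :=
      Nat.sInf_le ⟨canon S, rfl⟩
    exact le_antisymm (by rw [hw0]; exact hle) hge
  · intro k x h
    cases x with
    | center => exact h.elim
    | mid j => exact h.elim
    | leaf j => exact congrArg StarV.leaf (show k = j from h).symm
  · intro i j hij h1 h2
    refine ⟨Or.inr (Or.inl ⟨show i ∈ S from h1.1, show j ∈ S from h2.1, hij⟩), ?_⟩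
    intro h
    exact absurd (by injection h) hij.ne
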